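/- For every real d > 0, the function x ↦ d / √((sinh x)² − d²) is Lebesgue integrable on (arsinh d, ∞), the function t ↦ d / √(1 + d²·(cosh t)²) is Lebesgue integrable on (0, ∞), and ∫_{arsinh d}^{∞} d / √((sinh x)² − d²) dx = ∫_{0}^{∞} d / √(1 + d²·(cosh t)²) dt. -/

import Mathlib

open Real MeasureTheory

theorem catenoid_height_change_of_variables_infinite :
    ∀ d : ℝ, 0 < d →
      IntegrableOn (fun x => d / Real.sqrt ((Real.sinh x) ^ 2 - d ^ 2))
        (Set.Ioi (Real.arsinh d)) ∧
      IntegrableOn (fun t => d / Real.sqrt (1 + d ^ 2 * (Real.cosh t) ^ 2))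
        (Set.Ioi (0 : ℝ)) ∧
      (∫ x in Set.Ioi (Real.arsinh d), d / Real.sqrt ((Real.sinh x) ^ 2 - d ^ 2))
        = ∫ t in Set.Ioi (0 : ℝ), d / Real.sqrt (1 + d ^ 2 * (Real.cosh t) ^ 2) := by
  intro d hd
  set g : ℝ → ℝ := fun t => Real.arsinh (d * Real.cosh t) with hg
  set g' : ℝ → ℝ := fun t =>
    (Real.sqrt (1 + d ^ 2 * Real.cosh t ^ 2))⁻¹ * (d * Real.sinh t) with hg'
  have hs : MeasurableSet (Set.Ioi (0 : ℝ)) := measurableSet_Ioi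
  -- derivative
  have hderiv : ∀ t ∈ Set.Ioi (0 : ℝ),
      HasDerivWithinAt g (g' t) (Set.Ioi 0) t := by
    intro t _
    have h1 : HasDerivAt (fun t : ℝ => d * Real.cosh t) (d * Real.sinh t) t :=
      (Real.hasDerivAt_cosh t).const_mul d
    have h2 := (Real.hasDerivAt_arsinh (d * Real.cosh t)).comp t h1
    have : (Real.sqrt (1 + (d * Real.cosh t) ^ 2))⁻¹ * (d * Real.sinh t) = g' t := by
      rw [hg', mul_pow]
    rw [this] at h2
    exact h2.hasDerivWithinAt
  -- injectivity
  have hinj : Set.InjOn g (Set.Ioi 0) := by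
    intro a ha b hb hab
    have h1 : d * Real.cosh a = d * Real.cosh b := Real.arsinh_injective hab
    have h2 : Real.cosh a = Real.cosh b := by
      exact mul_left_cancel₀ (ne_of_gt hd) h1
    have habs : |a| = |b| := by
      by_contra h
      rcases lt_or_gt_of_ne h with h | h
      · exact absurd h2 (ne_of_lt (Real.cosh_lt_cosh.2 h))
      · exact absurd h2.symm (ne_of_lt (Real.cosh_lt_cosh.2 h))
    rwa [abs_of_pos (Set.mem_Ioi.1 ha), abs_of_pos (Set.mem_Ioi.1 hb)] at habs
  -- image
  have himg : g '' Set.Ioi 0 = Set.Ioi (Real.arsinh d) := by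
    ext x
    constructor
    · rintro ⟨t, ht, rfl⟩
      have h1 : 1 < Real.cosh t := Real.one_lt_cosh.2 (ne_of_gt (Set.mem_Ioi.1 ht))
      have : d < d * Real.cosh t := by nlinarith
      exact Set.mem_Ioi.2 (Real.arsinh_lt_arsinh.2 this)
    · intro hx
      have hx' : d < Real.sinh x := by
        have := Real.sinh_lt_sinh.2 (Set.mem_Ioi.1 hx)
        rwa [Real.sinh_arsinh] at this
      set y : ℝ := Real.sinh x / d with hy
      have hy1 : 1 < y := (one_lt_div hd).2 hx'
      set t : ℝ := Real.arsinh (Real.sqrt (y ^ 2 - 1)) with ht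
      have htpos : 0 < t := Real.arsinh_pos_iff.2 (Real.sqrt_pos.2 (by nlinarith))
      refine ⟨t, Set.mem_Ioi.2 htpos, ?_⟩
      have hcosh : Real.cosh t = y := by
        rw [ht, Real.cosh_arsinh, Real.sq_sqrt (by nlinarith : (0:ℝ) ≤ y ^ 2 - 1)]
        rw [show 1 + (y ^ 2 - 1) = y ^ 2 by ring]
        exact Real.sqrt_sq (by linarith)
      show Real.arsinh (d * Real.cosh t) = x
      rw [hcosh, hy, mul_div_cancel₀ _ (ne_of_gt hd), Real.arsinh_sinh]
  -- integrability of the target integrand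
  have hint2 : IntegrableOn (fun t => d / Real.sqrt (1 + d ^ 2 * Real.cosh t ^ 2))
      (Set.Ioi (0 : ℝ)) := by
    have hbig : IntegrableOn (fun t : ℝ => 2 * Real.exp (-1 * t)) (Set.Ioi 0) :=
      (exp_neg_integrableOn_Ioi 0 one_pos).const_mul 2
    refine hbig.mono' ?_ ?_
    · apply Continuous.aestronglyMeasurable
      apply Continuous.div continuous_const
      · exact (continuous_const.add ((continuous_const.mul
          ((Real.continuous_cosh.pow 2)))) ).sqrt
      · intro t
        have : (0:ℝ) < 1 + d ^ 2 * Real.cosh t ^ 2 := by positivity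
        exact ne_of_gt (Real.sqrt_pos.2 this)
    · filter_upwards [] with t
      have hct : 0 < Real.cosh t := Real.cosh_pos t
      have h1 : Real.exp t / 2 ≤ Real.cosh t := by
        rw [Real.cosh_eq]
        have := Real.exp_pos (-t); linarith
      have h2 : d * (Real.exp t / 2) ≤ Real.sqrt (1 + d ^ 2 * Real.cosh t ^ 2) := by
        have step : d * (Real.exp t / 2) ≤ d * Real.cosh t := by
          exact mul_le_mul_of_nonneg_left h1 hd.le
        refine step.trans ?_
        rw [show d * Real.cosh t = Real.sqrt ((d * Real.cosh t) ^ 2) from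
          (Real.sqrt_sq (by positivity)).symm]
        apply Real.sqrt_le_sqrt; nlinarith
      have hpos : (0:ℝ) < Real.sqrt (1 + d ^ 2 * Real.cosh t ^ 2) :=
        Real.sqrt_pos.2 (by positivity)
      have hdn : 0 ≤ d / Real.sqrt (1 + d ^ 2 * Real.cosh t ^ 2) := by positivity
      rw [Real.norm_eq_abs, abs_of_nonneg hdn, div_le_iff₀ hpos]
      have hexp : 0 < Real.exp t := Real.exp_pos t
      calc d = 2 * Real.exp (-1 * t) * (d * (Real.exp t / 2)) := by
              rw [neg_one_mul, Real.exp_neg]; field_simp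
        _ ≤ 2 * Real.exp (-1 * t) * Real.sqrt (1 + d ^ 2 * Real.cosh t ^ 2) := by
              apply mul_le_mul_of_nonneg_left h2; positivity
  -- pointwise identity on Ioi 0
  have hEq : ∀ t ∈ Set.Ioi (0:ℝ),
      |g' t| • (d / Real.sqrt (Real.sinh (g t) ^ 2 - d ^ 2))
        = d / Real.sqrt (1 + d ^ 2 * Real.cosh t ^ 2) := by
    intro t ht
    have hst : 0 < Real.sinh t := Real.sinh_pos_iff.2 (Set.mem_Ioi.1 ht)
    have hsg : Real.sinh (g t) = d * Real.cosh t := Real.sinh_arsinh _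
    have h1 : Real.sinh (g t) ^ 2 - d ^ 2 = (d * Real.sinh t) ^ 2 := by
      rw [hsg]; have := Real.cosh_sq' (x := t); nlinarith [this]
    have hsqrt : Real.sqrt (Real.sinh (g t) ^ 2 - d ^ 2) = d * Real.sinh t := by
      rw [h1, Real.sqrt_sq (by positivity)]
    have hgpos : 0 < g' t := by
      rw [hg']
      have : (0:ℝ) < Real.sqrt (1 + d ^ 2 * Real.cosh t ^ 2) :=
        Real.sqrt_pos.2 (by positivity)
      positivity
    rw [abs_of_pos hgpos, smul_eq_mul, hsqrt, hg']
    have hS : (0:ℝ) < Real.sqrt (1 + d ^ 2 * Real.cosh t ^ 2) :=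
      Real.sqrt_pos.2 (by positivity)
    field_simp
  -- apply the change of variables
  have hiff := integrableOn_image_iff_integrableOn_abs_deriv_smul hs hderiv hinj
      (fun x => d / Real.sqrt (Real.sinh x ^ 2 - d ^ 2))
  rw [himg] at hiff
  have hint2' : IntegrableOn
      (fun t => |g' t| • (d / Real.sqrt (Real.sinh (g t) ^ 2 - d ^ 2)))
      (Set.Ioi (0:ℝ)) := by
    apply hint2.congr_fun (fun t ht => (hEq t ht).symm) hs
  have hint1 : IntegrableOn (fun x => d / Real.sqrt (Real.sinh x ^ 2 - d ^ 2))
      (Set.Ioi (Real.arsinh d)) := hiff.2 hint2'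
  refine ⟨hint1, hint2, ?_⟩
  have hieq := integral_image_eq_integral_abs_deriv_smul hs hderiv hinj
      (fun x => d / Real.sqrt (Real.sinh x ^ 2 - d ^ 2))
  rw [himg] at hieq
  rw [hieq]
  exact setIntegral_congr_fun hs hEq
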